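/- The (4,2)-hypercontractivity theorem: for every f : {-1,1}ⁿ → ℝ, ‖T_{1/√3} f‖₄ ≤ ‖f‖₂. -/

import Mathlib

open Finset Function

noncomputable section

/-- Expectation with respect to the uniform measure on the Hamming cube,
encoded as `Fin n → Bool` (`true ↦ 1`, `false ↦ -1`). -/
def expec {n : ℕ} (f : (Fin n → Bool) → ℝ) : ℝ :=
  (∑ x : Fin n → Bool, f x) / 2 ^ n

/-- The character χ_S. -/
def chi {n : ℕ} (S : Finset (Fin n)) (x : Fin n → Bool) : ℝ :=
  ∏ i ∈ S, (if x i then (1 : ℝ) else -1)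

/-- Fourier coefficient f̂(S) = E[f χ_S]. -/
def fcoef {n : ℕ} (f : (Fin n → Bool) → ℝ) (S : Finset (Fin n)) : ℝ :=
  expec (fun x => f x * chi S x)

/-- Influence of coordinate i: probability that flipping coordinate i changes f. -/
def infl {n : ℕ} (f : (Fin n → Bool) → ℝ) (i : Fin n) : ℝ :=
  expec (fun x => if f x ≠ f (Function.update x i (!(x i))) then (1 : ℝ) else 0)

/-- Total influence. -/
def totalInfl {n : ℕ} (f : (Fin n → Bool) → ℝ) : ℝ :=
  ∑ i : Fin n, infl f i

/-- The p-norm ‖f‖_p = (E[|f|^p])^{1/p}. -/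
def pnorm {n : ℕ} (p : ℝ) (f : (Fin n → Bool) → ℝ) : ℝ :=
  (expec (fun x => |f x| ^ p)) ^ (1 / p)

/-- The discrete i-th derivative. -/
def deriv' {n : ℕ} (i : Fin n) (g : (Fin n → Bool) → ℝ) : (Fin n → Bool) → ℝ :=
  fun x => (g (Function.update x i true) - g (Function.update x i false)) / 2

/-- The noise operator T_ρ. -/
def noiseOp {n : ℕ} (ρ : ℝ) (f : (Fin n → Bool) → ℝ) : (Fin n → Bool) → ℝ :=
  fun x => ∑ S : Finset (Fin n), ρ ^ S.card * fcoef f S * chi S x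

end

noncomputable section

namespace Hyper

def sgn (b : Bool) : ℝ := if b then 1 else -1

def chi' {n : ℕ} (p : Fin n → Bool) (x : Fin n → Bool) : ℝ :=
  ∏ i, if p i then sgn (x i) else 1

def FF {n : ℕ} (a : (Fin n → Bool) → ℝ) (x : Fin n → Bool) : ℝ :=
  ∑ p : Fin n → Bool, a p * chi' p x

def wt {n : ℕ} (p : Fin n → Bool) : ℝ := ∏ i, if p i then (3:ℝ) else 1

lemma sum_pi_eq {n : ℕ} (f : (Fin (n+1) → Bool) → ℝ) :
    ∑ x : Fin (n+1) → Bool, f x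
      = ∑ y : Fin n → Bool, (f (Fin.cons false y) + f (Fin.cons true y)) := by
  rw [← (Fin.consEquiv (fun _ => Bool)).sum_comp f]
  rw [Fintype.sum_prod_type_right]
  simp [Fin.consEquiv]
  exact Finset.sum_congr rfl fun y _ => add_comm _ _

lemma expec_succ {n : ℕ} (f : (Fin (n+1) → Bool) → ℝ) :
    expec f = (expec (fun y => f (Fin.cons false y)) + expec (fun y => f (Fin.cons true y))) / 2 := by
  unfold expec
  rw [sum_pi_eq, Finset.sum_add_distrib]
  ring

lemma sum_prod_pi {n : ℕ} (g : Fin n → Bool → ℝ) :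
    ∑ x : Fin n → Bool, ∏ i, g i (x i) = ∏ i, (g i false + g i true) := by
  have h := Finset.prod_univ_sum (fun _ : Fin n => (Finset.univ : Finset Bool)) g
  rw [Fintype.piFinset_univ] at h
  rw [← h]
  congr 1; funext i
  simp [Fintype.sum_bool]; ring

end Hyper

namespace Hyper

lemma expec_chi'_mul_chi' {n : ℕ} (p q : Fin n → Bool) :
    expec (fun x => chi' p x * chi' q x) = if p = q then 1 else 0 := by
  unfold expec
  have h1 : ∀ x : Fin n → Bool, chi' p x * chi' q x
      = ∏ i, ((if p i then sgn (x i) else 1) * (if q i then sgn (x i) else 1)) := by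
    intro x; rw [chi', chi', ← Finset.prod_mul_distrib]
  simp only [h1]
  rw [sum_prod_pi (fun i b => (if p i then sgn b else 1) * (if q i then sgn b else 1))]
  have h2 : ∀ i, ((if p i then sgn false else 1) * (if q i then sgn false else 1)
      + (if p i then sgn true else 1) * (if q i then sgn true else 1))
      = if p i = q i then 2 else 0 := by
    intro i; cases hp : p i <;> cases hq : q i <;> norm_num [sgn]
  simp only [h2]
  by_cases hpq : p = q
  · subst hpq
    simp [Finset.prod_const, div_eq_one_iff_eq]
  · have : ∃ i, p i ≠ q i := by
      by_contra hc; push_neg at hc; exact hpq (funext hc)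
    obtain ⟨i, hi⟩ := this
    rw [Finset.prod_eq_zero (Finset.mem_univ i) (by simp [hi])]
    simp [hpq]

lemma expec_sum {n : ℕ} {ι : Type*} (s : Finset ι) (G : ι → (Fin n → Bool) → ℝ) :
    expec (fun x => ∑ p ∈ s, G p x) = ∑ p ∈ s, expec (G p) := by
  unfold expec
  rw [Finset.sum_comm, Finset.sum_div]

lemma expec_const_mul {n : ℕ} (c : ℝ) (g : (Fin n → Bool) → ℝ) :
    expec (fun x => c * g x) = c * expec g := by
  unfold expec; rw [← Finset.mul_sum, mul_div_assoc]

lemma expec_FF_mul_chi' {n : ℕ} (a : (Fin n → Bool) → ℝ) (q : Fin n → Bool) :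
    expec (fun x => FF a x * chi' q x) = a q := by
  have h1 : ∀ x, FF a x * chi' q x = ∑ p : Fin n → Bool, a p * (chi' p x * chi' q x) := by
    intro x; rw [FF, Finset.sum_mul]; exact Finset.sum_congr rfl fun p _ => by ring
  simp only [h1]
  rw [expec_sum]
  simp only [expec_const_mul, expec_chi'_mul_chi']
  simp

end Hyper

namespace Hyper

lemma kernel {n : ℕ} (x y : Fin n → Bool) :
    ∑ p : Fin n → Bool, chi' p x * chi' p y = if x = y then (2:ℝ)^n else 0 := by
  have h1 : ∀ p : Fin n → Bool, chi' p x * chi' p y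
      = ∏ i, (if p i then sgn (x i) * sgn (y i) else 1) := by
    intro p
    rw [chi', chi', ← Finset.prod_mul_distrib]
    exact Finset.prod_congr rfl fun i _ => by by_cases h : p i <;> simp [h]
  simp only [h1]
  rw [sum_prod_pi (fun i b => if b then sgn (x i) * sgn (y i) else 1)]
  norm_num
  have h2 : ∀ i, (1 + sgn (x i) * sgn (y i))
      = if x i = y i then 2 else 0 := by
    intro i; cases hx : x i <;> cases hy : y i <;> norm_num [sgn]
  simp only [h2]
  by_cases hxy : x = y
  · subst hxy; simp [Finset.prod_const]
  · have : ∃ i, x i ≠ y i := by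
      by_contra hc; push_neg at hc; exact hxy (funext hc)
    obtain ⟨i, hi⟩ := this
    rw [Finset.prod_eq_zero (Finset.mem_univ i) (by simp [hi])]
    simp [hxy]

lemma inversion {n : ℕ} (f : (Fin n → Bool) → ℝ) (x : Fin n → Bool) :
    FF (fun p => expec (fun y => f y * chi' p y)) x = f x := by
  unfold FF expec
  have h1 : ∀ p : Fin n → Bool,
      (∑ y : Fin n → Bool, f y * chi' p y) / 2 ^ n * chi' p x
        = ∑ y : Fin n → Bool, f y * (chi' p y * chi' p x) / 2 ^ n := by
    intro p
    rw [div_mul_eq_mul_div, Finset.sum_mul, Finset.sum_div]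
    exact Finset.sum_congr rfl fun y _ => by ring
  simp only [h1]
  rw [Finset.sum_comm]
  have h2 : ∀ y : Fin n → Bool,
      (∑ p : Fin n → Bool, f y * (chi' p y * chi' p x) / 2 ^ n)
        = f y * (if y = x then (2:ℝ)^n else 0) / 2^n := by
    intro y
    rw [← kernel y x, Finset.mul_sum, Finset.sum_div]
  simp only [h2]
  rw [Finset.sum_congr rfl (fun y _ => by
    by_cases h : y = x <;> simp [h] : ∀ y ∈ Finset.univ,
      f y * (if y = x then (2:ℝ)^n else 0) / 2^n = if y = x then f y * 2^n / 2^n else 0)]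
  rw [Finset.sum_ite_eq' Finset.univ x (fun y => f y * 2^n / 2^n)]
  simp

lemma parseval {n : ℕ} (f : (Fin n → Bool) → ℝ) :
    expec (fun x => f x ^ 2) = ∑ p : Fin n → Bool, (expec (fun y => f y * chi' p y))^2 := by
  set af : (Fin n → Bool) → ℝ := fun p => expec (fun y => f y * chi' p y) with haf
  have h1 : ∀ x, f x ^ 2 = ∑ p : Fin n → Bool, af p * (f x * chi' p x) := by
    intro x
    have := inversion f x
    calc f x ^ 2 = (FF af x) * f x := by rw [this]; ring
    _ = ∑ p : Fin n → Bool, af p * (f x * chi' p x) := by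
        rw [FF, Finset.sum_mul]; exact Finset.sum_congr rfl fun p _ => by ring
  simp only [h1]
  rw [expec_sum]
  simp only [expec_const_mul]
  exact Finset.sum_congr rfl fun p _ => by rw [sq]

end Hyper

namespace Hyper

lemma expec_nonneg {n : ℕ} {g : (Fin n → Bool) → ℝ} (h : ∀ x, 0 ≤ g x) : 0 ≤ expec g := by
  unfold expec
  apply div_nonneg (Finset.sum_nonneg fun x _ => h x) (by positivity)

lemma expec_add {n : ℕ} (g h : (Fin n → Bool) → ℝ) :
    expec (fun x => g x + h x) = expec g + expec h := by
  unfold expec; rw [Finset.sum_add_distrib, add_div]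

lemma expec_CS {n : ℕ} (u v : (Fin n → Bool) → ℝ) :
    (expec (fun x => u x * v x))^2 ≤ expec (fun x => u x ^ 2) * expec (fun x => v x ^ 2) := by
  unfold expec
  rw [div_pow, div_mul_div_comm, ← sq]
  rw [div_le_div_iff_of_pos_right (by positivity)]
  exact Finset.sum_mul_sq_le_sq_mul_sq _ _ _

lemma chi'_cons {n : ℕ} (pb : Bool) (p : Fin n → Bool) (s : Bool) (y : Fin n → Bool) :
    chi' (Fin.cons pb p) (Fin.cons s y) = (if pb then sgn s else 1) * chi' p y := by
  rw [chi', Fin.prod_univ_succ]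
  simp [chi', Fin.cons_zero, Fin.cons_succ]

lemma wt_cons {n : ℕ} (pb : Bool) (p : Fin n → Bool) :
    wt (Fin.cons pb p) = (if pb then (3:ℝ) else 1) * wt p := by
  rw [wt, Fin.prod_univ_succ]
  simp [wt, Fin.cons_zero, Fin.cons_succ]

lemma wt_nonneg {n : ℕ} (p : Fin n → Bool) : 0 ≤ wt p :=
  Finset.prod_nonneg fun i _ => by by_cases h : p i <;> simp [h] <;> norm_num

lemma FF_cons {n : ℕ} (a : (Fin (n+1) → Bool) → ℝ) (s : Bool) (y : Fin n → Bool) :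
    FF a (Fin.cons s y)
      = FF (fun p => a (Fin.cons false p)) y + sgn s * FF (fun p => a (Fin.cons true p)) y := by
  rw [FF, sum_pi_eq (fun pp => a pp * chi' pp (Fin.cons s y))]
  simp only [chi'_cons]
  rw [Finset.sum_add_distrib, FF, FF, Finset.mul_sum]
  congr 1
  · apply Finset.sum_congr rfl; intro p _; norm_num
  · apply Finset.sum_congr rfl; intro p _
    simp only [if_true]
    norm_num
    ring

end Hyper

namespace Hyper

lemma main : ∀ {n : ℕ} (a : (Fin n → Bool) → ℝ),
    expec (fun x => (FF a x)^4) ≤ (∑ p : Fin n → Bool, wt p * (a p)^2)^2 := by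
  intro n
  induction n with
  | zero =>
    intro a
    have hu : (Finset.univ : Finset (Fin 0 → Bool)) = {fun i => i.elim0} := by
      apply Finset.eq_singleton_iff_unique_mem.mpr
      exact ⟨Finset.mem_univ _, fun x _ => funext fun i => i.elim0⟩
    simp only [expec, FF, chi', wt, hu, Finset.sum_singleton, Finset.univ_eq_empty,
      Finset.prod_empty, mul_one, one_mul, pow_zero, div_one]
    exact le_of_eq (by ring)
  | succ n ih =>
    intro a
    set a0 : (Fin n → Bool) → ℝ := fun p => a (Fin.cons false p) with ha0
    set a1 : (Fin n → Bool) → ℝ := fun p => a (Fin.cons true p) with ha1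
    set g : (Fin n → Bool) → ℝ := FF a0 with hgdef
    set h : (Fin n → Bool) → ℝ := FF a1 with hhdef
    set P : ℝ := ∑ p : Fin n → Bool, wt p * (a0 p)^2 with hPdef
    set Q : ℝ := ∑ p : Fin n → Bool, wt p * (a1 p)^2 with hQdef
    have hP : 0 ≤ P := Finset.sum_nonneg fun p _ => mul_nonneg (wt_nonneg p) (sq_nonneg _)
    have hQ : 0 ≤ Q := Finset.sum_nonneg fun p _ => mul_nonneg (wt_nonneg p) (sq_nonneg _)
    have hg : expec (fun y => g y ^ 4) ≤ P ^ 2 := ih a0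
    have hh : expec (fun y => h y ^ 4) ≤ Q ^ 2 := ih a1
    -- decompose expectation
    have key : expec (fun x => (FF a x)^4)
        = expec (fun y => g y ^ 4) + (6 * expec (fun y => g y ^ 2 * h y ^ 2)
            + expec (fun y => h y ^ 4)) := by
      rw [expec_succ (fun x => (FF a x)^4)]
      have e0 : (fun y => FF a (Fin.cons false y) ^ 4) = fun y => (g y - h y)^4 := by
        funext y; rw [FF_cons]; simp [sgn]; ring
      have e1 : (fun y => FF a (Fin.cons true y) ^ 4) = fun y => (g y + h y)^4 := by
        funext y; rw [FF_cons]; simp [sgn]; rfl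
      rw [e0, e1, ← expec_add]
      have e2 : (fun x => (g x - h x)^4 + (g x + h x)^4)
          = fun x => 2 * (g x ^ 4 + (6 * (g x ^ 2 * h x ^ 2) + h x ^ 4)) := by
        funext x; ring
      rw [e2, expec_const_mul]
      rw [expec_add, expec_add, expec_const_mul]
      ring
    -- Cauchy-Schwarz
    have hX : 0 ≤ expec (fun y => g y ^ 2 * h y ^ 2) :=
      expec_nonneg fun y => by positivity
    have hcs : expec (fun y => g y ^ 2 * h y ^ 2) ≤ P * Q := by
      have h2 := expec_CS (fun y => g y ^ 2) (fun y => h y ^ 2)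
      have e3 : expec (fun y => (g y ^ 2) ^ 2) = expec (fun y => g y ^ 4) := by
        congr 1; funext y; ring
      have e4 : expec (fun y => (h y ^ 2) ^ 2) = expec (fun y => h y ^ 4) := by
        congr 1; funext y; ring
      rw [e3, e4] at h2
      have h3 : (expec (fun y => g y ^ 2 * h y ^ 2))^2 ≤ (P * Q)^2 := by
        calc (expec (fun y => g y ^ 2 * h y ^ 2))^2
            ≤ expec (fun y => g y ^ 4) * expec (fun y => h y ^ 4) := h2
          _ ≤ P^2 * Q^2 := by
              apply mul_le_mul hg hh (expec_nonneg fun y => by positivity) (by positivity)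
          _ = (P * Q)^2 := by ring
      exact (pow_le_pow_iff_left₀ hX (mul_nonneg hP hQ) two_ne_zero).mp h3
    -- RHS decomposition
    have hrhs : ∑ pp : Fin (n+1) → Bool, wt pp * (a pp)^2 = P + 3 * Q := by
      rw [sum_pi_eq (fun pp => wt pp * (a pp)^2), Finset.sum_add_distrib]
      rw [hPdef, hQdef, Finset.mul_sum]
      congr 1
      · apply Finset.sum_congr rfl; intro p _; rw [wt_cons]; norm_num; exact Or.inl rfl
      · apply Finset.sum_congr rfl; intro p _; rw [wt_cons]; norm_num; ring
    rw [key, hrhs]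
    nlinarith [sq_nonneg Q, hg, hh, hcs, hX]

end Hyper

namespace Hyper

def stp {n : ℕ} (p : Fin n → Bool) : Finset (Fin n) :=
  Finset.univ.filter (fun i => p i = true)

lemma stp_bij {n : ℕ} : Function.Bijective (stp (n := n)) := by
  constructor
  · intro p q hpq
    funext i
    have h1 : (i ∈ stp p) = (i ∈ stp q) := by rw [hpq]
    simp only [stp, Finset.mem_filter, Finset.mem_univ, true_and, eq_iff_iff] at h1
    cases hp : p i <;> cases hq : q i <;> simp [hp, hq] at h1 ⊢
  · intro S
    refine ⟨fun i => decide (i ∈ S), ?_⟩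
    ext i; simp [stp]

lemma chi_stp {n : ℕ} (p : Fin n → Bool) (x : Fin n → Bool) :
    (∏ i ∈ stp p, (if x i then (1:ℝ) else -1)) = chi' p x := by
  rw [stp, Finset.prod_filter, chi']
  apply Finset.prod_congr rfl
  intro i _
  by_cases h : p i <;> simp [h, sgn]

lemma wt_stp {n : ℕ} (p : Fin n → Bool) : wt p = 3 ^ (stp p).card := by
  rw [wt, stp]
  rw [← Finset.prod_const (b := (3:ℝ)), ← Finset.prod_filter]

end Hyper

namespace Hyper

lemma fcoef_stp {n : ℕ} (f : (Fin n → Bool) → ℝ) (p : Fin n → Bool) :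
    fcoef f (stp p) = expec (fun y => f y * chi' p y) := by
  simp only [fcoef, chi]; congr 1; funext y; rw [chi_stp]

lemma noiseOp_eq {n : ℕ} (ρ : ℝ) (f : (Fin n → Bool) → ℝ) (x : Fin n → Bool) :
    noiseOp ρ f x = FF (fun p => ρ ^ (stp p).card * fcoef f (stp p)) x := by
  simp only [noiseOp, chi, FF]
  rw [← Function.Bijective.sum_comp stp_bij
    (fun S => ρ ^ S.card * fcoef f S * ∏ i ∈ S, (if x i then (1:ℝ) else -1))]
  apply Finset.sum_congr rfl
  intro p _
  simp only [chi_stp]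

end Hyper


/-- The (4,2)-hypercontractivity theorem. -/
theorem hypercontractivity_42 {n : ℕ} (f : (Fin n → Bool) → ℝ) :
    pnorm 4 (noiseOp (1 / Real.sqrt 3) f) ≤ pnorm 2 f := by
  rw [pnorm, pnorm]
  classical
  set ρ : ℝ := 1 / Real.sqrt 3 with hρ
  set b : (Fin n → Bool) → ℝ :=
    fun p => ρ ^ (Hyper.stp p).card * fcoef f (Hyper.stp p) with hb
  set A : ℝ := expec (fun x => f x ^ 2) with hA
  have hAnn : 0 ≤ A := Hyper.expec_nonneg fun x => sq_nonneg _
  have hρ2 : ρ ^ 2 = 1 / 3 := by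
    rw [hρ, div_pow, one_pow, Real.sq_sqrt (by norm_num : (0:ℝ) ≤ 3)]
  have hw : ∀ p : Fin n → Bool,
      Hyper.wt p * (b p) ^ 2 = (expec fun y => f y * Hyper.chi' p y) ^ 2 := by
    intro p
    simp only [hb]
    rw [Hyper.wt_stp, Hyper.fcoef_stp, mul_pow, ← mul_assoc]
    have h1 : (3:ℝ) ^ (Hyper.stp p).card * (ρ ^ (Hyper.stp p).card) ^ 2 = 1 := by
      rw [← pow_mul, mul_comm (Hyper.stp p).card 2, pow_mul, hρ2, ← mul_pow]
      norm_num
    rw [h1, one_mul]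
  have hXA : expec (fun x => (Hyper.FF b x)^4) ≤ A ^ 2 := by
    refine (Hyper.main b).trans (le_of_eq ?_)
    rw [Finset.sum_congr rfl (fun p _ => hw p)]
    congr 1
    rw [hA, Hyper.parseval f]
  have h4 : expec (fun x => |noiseOp ρ f x| ^ (4:ℝ)) = expec (fun x => (Hyper.FF b x)^4) := by
    congr 1; funext x
    rw [Hyper.noiseOp_eq ρ f x]
    rw [show (4:ℝ) = ((4:ℕ):ℝ) by norm_num, Real.rpow_natCast, pow_abs,
      abs_of_nonneg (by positivity)]
  have h2 : expec (fun x => |f x| ^ (2:ℝ)) = A := by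
    rw [hA]; congr 1; funext x
    rw [show (2:ℝ) = ((2:ℕ):ℝ) by norm_num, Real.rpow_natCast, pow_abs,
      abs_of_nonneg (sq_nonneg _)]
  rw [h4, h2]
  have hXnn : 0 ≤ expec (fun x => (Hyper.FF b x)^4) :=
    Hyper.expec_nonneg fun x => by positivity
  calc (expec fun x => (Hyper.FF b x)^4) ^ ((1:ℝ)/4)
      ≤ (A^2) ^ ((1:ℝ)/4) := Real.rpow_le_rpow hXnn hXA (by norm_num)
    _ = A ^ ((1:ℝ)/2) := by
        rw [← Real.rpow_natCast A 2, ← Real.rpow_mul hAnn]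
        norm_num

end
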